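/- Chen's mean time to data loss for the serial exponential repair model, MTDL_Chen = Σ_{l=0}^{n-k} (1/(n-l)!) Σ_{i=0}^{n-k-l} μ^i λ^{-(i+1)} (n-l-i-1)!, satisfies lim_{μ→∞} MTDL_Chen / (μ^{n-k}/λ^{n-k+1}) = (k-1)!/n!. -/

import Mathlib

open Real Filter Finset

/-- Dominant term of Chen's MTDL for serial exponential repair as `μ → ∞`:
`MTDL_Chen / (μ^{n-k}/λ^{n-k+1}) → (k-1)!/n!`. -/
theorem chen_mtdl_asymptotics (n k : ℕ) (hk : 1 ≤ k) (hkn : k < n)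
    (lam : ℝ) (hlam : 0 < lam) :
    Filter.Tendsto
      (fun mu : ℝ =>
        (∑ l ∈ Finset.range (n - k + 1), (1 / (Nat.factorial (n - l) : ℝ)) *
            ∑ i ∈ Finset.range (n - k - l + 1),
              mu ^ i * (lam ^ (i + 1))⁻¹ * (Nat.factorial (n - l - i - 1) : ℝ)) /
          (mu ^ (n - k) / lam ^ (n - k + 1)))
      atTop (nhds ((Nat.factorial (k - 1) : ℝ) / (Nat.factorial n : ℝ))) := by
  set m := n - k with hm
  set g : ℝ → ℝ := fun t => ∑ l ∈ Finset.range (m + 1),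
      ∑ i ∈ Finset.range (m - l + 1),
        ((Nat.factorial (n - l - i - 1) : ℝ) / (Nat.factorial (n - l)) * lam ^ (m - i))
          * t ^ (m - i) with hg
  have hlam' : lam ≠ 0 := hlam.ne'
  have hgcont : Continuous g := by
    apply continuous_finset_sum _ fun l _ => ?_
    exact continuous_finset_sum _ fun i _ => continuous_const.mul (continuous_pow _)
  have hg0 : g 0 = (Nat.factorial (k - 1) : ℝ) / (Nat.factorial n : ℝ) := by
    rw [hg]
    simp only
    rw [Finset.sum_eq_single 0]
    · rw [Finset.sum_eq_single m]
      · have hnm : n - m - 1 = k - 1 := by omega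
        simp [Nat.sub_self, hnm]
      · intro i hi hine
        have : m - i ≠ 0 := by
          have := Finset.mem_range.mp hi
          omega
        simp [zero_pow this]
      · intro h
        exact absurd (Finset.mem_range.mpr (by omega)) h
    · intro l hl hlne
      apply Finset.sum_eq_zero
      intro i hi
      have hi' := Finset.mem_range.mp hi
      have : m - i ≠ 0 := by omega
      simp [zero_pow this]
    · intro h
      exact absurd (Finset.mem_range.mpr (by omega)) h
  have hginv : Tendsto (fun mu : ℝ => g mu⁻¹) atTop
      (nhds ((Nat.factorial (k - 1) : ℝ) / (Nat.factorial n : ℝ))) := by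
    rw [← hg0]
    exact (hgcont.tendsto 0).comp tendsto_inv_atTop_zero
  apply hginv.congr'
  filter_upwards [eventually_gt_atTop (0 : ℝ)] with mu hmu
  have hmu' : mu ≠ 0 := hmu.ne'
  rw [hg]
  simp only
  rw [Finset.sum_div]
  apply Finset.sum_congr rfl
  intro l hl
  rw [Finset.mul_sum, Finset.sum_div]
  apply Finset.sum_congr rfl
  intro i hi
  have hi' : i ≤ m := le_trans (Nat.le_of_lt_succ (Finset.mem_range.mp hi)) (Nat.sub_le m l)
  have e1 : mu ^ m = mu ^ i * mu ^ (m - i) := by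
    rw [← pow_add, Nat.add_sub_cancel' hi']
  have e2 : lam ^ (m + 1) = lam ^ (i + 1) * lam ^ (m - i) := by
    rw [← pow_add]; congr 1; omega
  have hf : (Nat.factorial (n - l) : ℝ) ≠ 0 := Nat.cast_ne_zero.mpr (Nat.factorial_ne_zero _)
  field_simp
  rw [e1, e2]
  have h3 : mu ^ (m - i) * mu⁻¹ ^ (m - i) = 1 := by rw [← mul_pow, mul_inv_cancel₀ hmu', one_pow]
  linear_combination (lam * lam ^ (m - i) * lam ^ i * mu ^ i) * h3
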